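/- Let A and B be real n×n matrices with B positive, and let (λ, z) be a generalized eigenpair of the pencil (A,B). Writing z = x + i y and λ = α + i β, and with a := xᵀAx + yᵀAy, b := xᵀBx + yᵀBy, c := xᵀ(B − Bᵀ)y, d := xᵀ(A − Aᵀ)y, the real and imaginary parts satisfy the linear system b α − c β = a and c α + b β = d; in particular b > 0, so b² + c² > 0 and α = (a b + c d)/(b² + c²). -/

import Mathlib

open Matrix

/-- For a generalized eigenpair `(λ, z)` of a real pencil `(A, B)` with `B` positive,
writing `z = x + i y`, `λ = α + i β`, and with
`a = xᵀAx + yᵀAy`, `b = xᵀBx + yᵀBy`, `c = xᵀ(B − Bᵀ)y`, `d = xᵀ(A − Aᵀ)y`,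
one has `bα − cβ = a`, `cα + bβ = d`, `b > 0`, `b² + c² > 0` and
`α = (ab + cd)/(b² + c²)`. -/
theorem stmt_2 (n : ℕ) (A B : Matrix (Fin n) (Fin n) ℝ)
    (hB : ∀ v : Fin n → ℝ, v ≠ 0 → 0 < v ⬝ᵥ (B *ᵥ v))
    (lam : ℂ) (z : Fin n → ℂ) (hz : z ≠ 0)
    (heig : (A.map Complex.ofReal) *ᵥ z = lam • ((B.map Complex.ofReal) *ᵥ z))
    (x y : Fin n → ℝ) (hx : ∀ i, x i = (z i).re) (hy : ∀ i, y i = (z i).im)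
    (α β : ℝ) (hα : α = lam.re) (hβ : β = lam.im)
    (a b c d : ℝ)
    (ha : a = x ⬝ᵥ (A *ᵥ x) + y ⬝ᵥ (A *ᵥ y))
    (hb : b = x ⬝ᵥ (B *ᵥ x) + y ⬝ᵥ (B *ᵥ y))
    (hc : c = x ⬝ᵥ ((B - Bᵀ) *ᵥ y))
    (hd : d = x ⬝ᵥ ((A - Aᵀ) *ᵥ y)) :
    b * α - c * β = a ∧ c * α + b * β = d ∧ 0 < b ∧ 0 < b ^ 2 + c ^ 2 ∧
      α = (a * b + c * d) / (b ^ 2 + c ^ 2) := by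
  -- real and imaginary parts of the eigen equation
  have key : ∀ i, (A *ᵥ x) i = α * (B *ᵥ x) i - β * (B *ᵥ y) i ∧
      (A *ᵥ y) i = β * (B *ᵥ x) i + α * (B *ᵥ y) i := by
    intro i
    have h := congrFun heig i
    rw [Complex.ext_iff] at h
    simp only [mulVec, dotProduct, Matrix.map_apply, Pi.smul_apply, smul_eq_mul,
      Complex.re_sum, Complex.im_sum, Complex.mul_re, Complex.mul_im,
      Complex.ofReal_re, Complex.ofReal_im, zero_mul, sub_zero, add_zero, zero_add,
      Finset.mul_sum] at h
    obtain ⟨h1, h2⟩ := h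
    constructor
    · simp only [mulVec, dotProduct, hx, hy, hα, hβ, Finset.mul_sum]
      rw [h1]; rw [← Finset.sum_sub_distrib]
    · simp only [mulVec, dotProduct, hx, hy, hα, hβ, Finset.mul_sum]
      rw [h2]; rw [← Finset.sum_add_distrib]
      exact Finset.sum_congr rfl fun j _ => by ring
  have hAx : A *ᵥ x = α • (B *ᵥ x) - β • (B *ᵥ y) := funext fun i => (key i).1
  have hAy : A *ᵥ y = β • (B *ᵥ x) + α • (B *ᵥ y) := funext fun i => (key i).2
  -- transpose identity
  have htr : ∀ M : Matrix (Fin n) (Fin n) ℝ, x ⬝ᵥ (Mᵀ *ᵥ y) = y ⬝ᵥ (M *ᵥ x) := by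
    intro M
    simp only [dotProduct, mulVec, transpose_apply, Finset.mul_sum]
    rw [Finset.sum_comm]
    exact Finset.sum_congr rfl fun i _ => Finset.sum_congr rfl fun j _ => by ring
  -- abbreviations
  set p := x ⬝ᵥ (B *ᵥ x) with hp
  set q := y ⬝ᵥ (B *ᵥ y) with hq
  set r := x ⬝ᵥ (B *ᵥ y) with hr
  set s := y ⬝ᵥ (B *ᵥ x) with hs
  have hc' : c = r - s := by
    rw [hc, sub_mulVec, dotProduct_sub, htr B]
  have ha' : a = α * p - β * r + (β * s + α * q) := by
    rw [ha, hAx, hAy]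
    simp [dotProduct_sub, dotProduct_add, dotProduct_smul, smul_eq_mul]
    rfl
  have hd' : d = β * p + α * r - (α * s - β * q) := by
    rw [hd, sub_mulVec, dotProduct_sub, htr A, hAy, hAx]
    simp [dotProduct_sub, dotProduct_add, dotProduct_smul, smul_eq_mul]
    rfl
  -- positivity of b
  have hxy : x ≠ 0 ∨ y ≠ 0 := by
    by_contra h
    push_neg at h
    obtain ⟨h1, h2⟩ := h
    apply hz
    funext i
    have := congrFun h1 i
    have := congrFun h2 i
    exact Complex.ext ((hx i).symm.trans (congrFun h1 i)) ((hy i).symm.trans (congrFun h2 i))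
  have hppos : 0 ≤ p ∧ 0 ≤ q ∧ 0 < p + q := by
    have hx0 : x = 0 ∨ 0 < p := by
      rcases eq_or_ne x 0 with h | h
      · exact Or.inl h
      · exact Or.inr (hB x h)
    have hy0 : y = 0 ∨ 0 < q := by
      rcases eq_or_ne y 0 with h | h
      · exact Or.inl h
      · exact Or.inr (hB y h)
    rcases hx0 with h | h <;> rcases hy0 with h' | h'
    · exact absurd h (hxy.resolve_right (not_not.mpr h'))
    · refine ⟨le_of_eq ?_, le_of_lt h', by rw [hp, h]; simpa using h'⟩
      rw [hp, h]; simp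
    · refine ⟨le_of_lt h, le_of_eq ?_, by rw [hq, h']; simpa using h⟩
      rw [hq, h']; simp [dotProduct]
    · exact ⟨le_of_lt h, le_of_lt h', by positivity⟩
  have hbpos : 0 < b := by rw [hb]; exact hppos.2.2
  have e1 : b * α - c * β = a := by rw [hb, hc', ha']; ring
  have e2 : c * α + b * β = d := by rw [hb, hc', hd']; ring
  have hbc : 0 < b ^ 2 + c ^ 2 := by positivity
  refine ⟨e1, e2, hbpos, hbc, ?_⟩
  field_simp
  linear_combination b * e1 + c * e2
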